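/- The set of trivial observables on a state space S equals the intersection of the simulation sets of all non-trivial observables: T_1 = ⋂_{B ∉ T_1} simu(B), where simu(B) = {A : B → A}, i.e., any observable that is a post-processing of every non-trivial observable is itself trivial. -/

import Mathlib

set_option maxHeartbeats 1000000


/-- An effect on a state space `S`. -/
def IsEffect {V : Type*} [AddCommGroup V] [Module ℝ V]
    (S : Set V) (e : V →ₗ[ℝ] ℝ) : Prop :=
  ∀ s ∈ S, 0 ≤ e s ∧ e s ≤ 1

/-- An observable with outcome set `Fin n`. -/
def IsObservable {V : Type*} [AddCommGroup V] [Module ℝ V]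
    (S : Set V) (u : V →ₗ[ℝ] ℝ) {n : ℕ} (A : Fin n → (V →ₗ[ℝ] ℝ)) : Prop :=
  (∀ i, IsEffect S (A i)) ∧ ∑ i, A i = u

/-- A trivial observable: `A x = p x • u` for a probability distribution `p`. -/
def IsTrivial {V : Type*} [AddCommGroup V] [Module ℝ V]
    (u : V →ₗ[ℝ] ℝ) {n : ℕ} (A : Fin n → (V →ₗ[ℝ] ℝ)) : Prop :=
  ∃ p : Fin n → ℝ, (∀ x, 0 ≤ p x) ∧ ∑ x, p x = 1 ∧ ∀ x, A x = p x • u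

/-- `A` is a post-processing of `B` (i.e. `B → A`, `A ∈ simu(B)`): there is a
right-stochastic matrix `ν` with `A y = ∑ₓ ν x y • B x`. -/
def IsPostProc {V : Type*} [AddCommGroup V] [Module ℝ V]
    {l k : ℕ} (B : Fin l → (V →ₗ[ℝ] ℝ)) (A : Fin k → (V →ₗ[ℝ] ℝ)) : Prop :=
  ∃ ν : Fin l → Fin k → ℝ,
    (∀ x y, 0 ≤ ν x y) ∧ (∀ x, ∑ y, ν x y = 1) ∧
    ∀ y, A y = ∑ x, ν x y • B x

/-- Prop. 5: `T₁ = ⋂_{B ∉ T₁} simu(B)`: an observable is trivial iff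
it is a post-processing of every non-trivial observable.  (It is assumed that
non-trivial observables exist: there is an effect not proportional to `u`.) -/
theorem trivial_iff_postProc_of_every_nontrivial
    {V : Type*} [NormedAddCommGroup V] [NormedSpace ℝ V] [FiniteDimensional ℝ V]
    (S : Set V) (hSne : S.Nonempty) (hScvx : Convex ℝ S) (hScpt : IsCompact S)
    (u : V →ₗ[ℝ] ℝ) (hu : ∀ s ∈ S, u s = 1)
    (hnontriv : ∃ e : V →ₗ[ℝ] ℝ, IsEffect S e ∧ ∀ c : ℝ, e ≠ c • u)
    {k : ℕ} (A : Fin k → (V →ₗ[ℝ] ℝ)) (hA : IsObservable S u A) :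
    IsTrivial u A ↔
      ∀ (l : ℕ) (B : Fin l → (V →ₗ[ℝ] ℝ)),
        IsObservable S u B → ¬ IsTrivial u B → IsPostProc B A := by
  obtain ⟨e, he, he2⟩ := hnontriv
  obtain ⟨s₀, hs₀⟩ := hSne
  have hus₀ : u s₀ = 1 := hu s₀ hs₀
  constructor
  · rintro ⟨p, hp0, hp1, hpA⟩ l B hB _
    refine ⟨fun x y => p y, fun x y => hp0 y, fun x => hp1, fun y => ?_⟩
    rw [hpA y, ← hB.2, Finset.smul_sum]
  · intro h
    -- linear independence of u and e
    have hindep : ∀ a b : ℝ, a • u + b • e = 0 → a = 0 ∧ b = 0 := by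
      intro a b hab
      have hb : b = 0 := by
        by_contra hb
        apply he2 (-a / b)
        have h2 : b • e = (-a) • u := by
          have := eq_neg_of_add_eq_zero_right hab
          rw [this]; exact (neg_smul a u).symm
        calc e = b⁻¹ • (b • e) := by rw [smul_smul, inv_mul_cancel₀ hb, one_smul]
          _ = b⁻¹ • ((-a) • u) := by rw [h2]
          _ = (-a / b) • u := by rw [smul_smul]; congr 1; field_simp
      refine ⟨?_, hb⟩
      rw [hb, zero_smul, add_zero] at hab
      have := congrArg (fun f : V →ₗ[ℝ] ℝ => f s₀) hab
      simpa [hus₀] using this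
    -- representation with small e-coefficient, for each ε ∈ (0,1]
    have main : ∀ y : Fin k, ∀ ε : ℝ, 0 < ε → ε ≤ 1 →
        ∃ a b : ℝ, |b| ≤ ε ∧ A y = a • u + b • e := by
      intro y ε hε hε1
      set B : Fin 2 → (V →ₗ[ℝ] ℝ) := fun i => if i = 0 then ε • e else u - ε • e
        with hBdef
      have hB0 : B 0 = ε • e := if_pos rfl
      have hB1 : B 1 = u - ε • e := if_neg (by decide)
      have hBobs : IsObservable S u B := by
        constructor
        · intro i
          by_cases hi : i = 0
          · subst hi
            rw [hB0]
            intro s hs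
            simp only [LinearMap.smul_apply, smul_eq_mul]
            obtain ⟨h1, h2⟩ := he s hs
            constructor
            · positivity
            · nlinarith
          · have hBi : B i = u - ε • e := if_neg hi
            rw [hBi]
            intro s hs
            simp only [LinearMap.sub_apply, LinearMap.smul_apply, smul_eq_mul]
            obtain ⟨h1, h2⟩ := he s hs
            have hus : u s = 1 := hu s hs
            constructor
            · nlinarith
            · nlinarith
        · rw [Fin.sum_univ_two, hB0, hB1]
          abel
      have hBnt : ¬ IsTrivial u B := by
        rintro ⟨p, _, _, hp⟩
        have h0 : ε • e = p 0 • u := hB0 ▸ hp 0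
        apply he2 (ε⁻¹ * p 0)
        calc e = ε⁻¹ • (ε • e) := by rw [smul_smul, inv_mul_cancel₀ hε.ne', one_smul]
          _ = ε⁻¹ • (p 0 • u) := by rw [h0]
          _ = (ε⁻¹ * p 0) • u := by rw [smul_smul]
      obtain ⟨ν, hν0, hν1, hνA⟩ := h 2 B hBobs hBnt
      have hle1 : ∀ x, ν x y ≤ 1 := by
        intro x
        calc ν x y ≤ ∑ y', ν x y' :=
              Finset.single_le_sum (fun y' _ => hν0 x y') (Finset.mem_univ y)
          _ = 1 := hν1 x
      refine ⟨ν 1 y, ε * (ν 0 y - ν 1 y), ?_, ?_⟩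
      · rw [abs_mul, abs_of_pos hε]
        have : |ν 0 y - ν 1 y| ≤ 1 := by
          rw [abs_le]
          constructor
          · have := hν0 0 y; have := hle1 1; linarith
          · have := hle1 0; have := hν0 1 y; linarith
        nlinarith
      · rw [hνA y, Fin.sum_univ_two, hB0, hB1]
        module
    -- each A y is proportional to u
    have key : ∀ y, A y = (A y s₀) • u := by
      intro y
      obtain ⟨a, b, _, hab⟩ := main y 1 one_pos le_rfl
      have hb0 : b = 0 := by
        by_contra hb
        have hbpos : 0 < |b| := abs_pos.mpr hb
        set ε : ℝ := min (|b| / 2) 1 with hεdef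
        have hεpos : 0 < ε := lt_min (by linarith) one_pos
        obtain ⟨a', b', hb'le, hab'⟩ := main y ε hεpos (min_le_right _ _)
        have heq : (a - a') • u + (b - b') • e = 0 := by
          rw [(sub_smul a a' u : (a - a') • u = a • u - a' • u), (sub_smul b b' e : (b - b') • e = b • e - b' • e)]
          rw [show a • u - a' • u + (b • e - b' • e)
              = (a • u + b • e) - (a' • u + b' • e) by abel, ← hab, ← hab', sub_self]
        have hbb : b = b' := by
          have := (hindep _ _ heq).2
          linarith
        have : ε ≤ |b| / 2 := min_le_left _ _
        rw [← hbb] at hb'le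
        linarith
      rw [hb0, zero_smul, add_zero] at hab
      have has : A y s₀ = a := by rw [hab]; simp [hus₀]
      rw [has, hab]
    refine ⟨fun y => A y s₀, fun y => ((hA.1 y) s₀ hs₀).1, ?_, key⟩
    have : (∑ y, A y) s₀ = u s₀ := by rw [hA.2]
    simpa [hus₀] using this
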